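/- (Decay rate of integrated MSE for a finite-dimensional field class.) In the binary-sensing model with inf_{x∈D} p_X(x) = ν > 0, suppose f lies in the span of a fixed orthonormal family {φ_0, …, φ_{k−1}} in L²(D), i.e., f = Σ_{j=0}^{k−1} ⟨f, φ_j⟩ φ_j. Then the estimate with truncation point m = k satisfies, for every zero-mean noise distribution supported in [−b, b], E[‖f − f̂_{n,k}‖²] ≤ c² k / (n ν); in particular the integrated MSE is O(1/n). -/

import Mathlib

open MeasureTheory ProbabilityTheory Filter
open scoped ENNReal Topology

noncomputable section

/-- Sign function: `+1` if `u > 0` and `-1` otherwise. -/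
def sgn' (u : ℝ) : ℝ := if 0 < u then 1 else -1

/-- Binary-quantized observation of sensor `i`: `B i = sgn (f (X i) + Z i - T i)`. -/
def obsB {E Ω : Type*} (f : E → ℝ) (X : ℕ → Ω → E) (Z T : ℕ → Ω → ℝ)
    (i : ℕ) (ω : Ω) : ℝ :=
  sgn' (f (X i ω) + Z i ω - T i ω)

/-- Estimate of the `j`-th coefficient from the first `n` sensors:
`α̂_j = (c/n) ∑_{i<n} (φ_j(X_i))^* / p_X(X_i) * B_i`. -/
def alphaHat {E Ω : Type*} (c : ℝ) (pX : E → ℝ) (φ : ℕ → E → ℂ) (f : E → ℝ)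
    (X : ℕ → Ω → E) (Z T : ℕ → Ω → ℝ) (n j : ℕ) (ω : Ω) : ℂ :=
  ((c : ℂ) / (n : ℂ)) * ∑ i ∈ Finset.range n,
    (starRingEnd ℂ) (φ j (X i ω)) / (pX (X i ω) : ℂ) * (obsB f X Z T i ω : ℂ)

/-- The `j`-th coefficient of the field `f`: `α_j = ⟨f, φ_j⟩ = ∫_D f (φ_j)^*`. -/
def coeff {E : Type*} [MeasureSpace E] (D : Set E) (f : E → ℝ) (φ : ℕ → E → ℂ)
    (j : ℕ) : ℂ :=
  ∫ x in D, (f x : ℂ) * (starRingEnd ℂ) (φ j x)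

/-- The `m`-term field estimate `f̂_{n,m} = ∑_{j<m} α̂_j φ_j`. -/
def fieldEst {E Ω : Type*} (c : ℝ) (pX : E → ℝ) (φ : ℕ → E → ℂ) (f : E → ℝ)
    (X : ℕ → Ω → E) (Z T : ℕ → Ω → ℝ) (n m : ℕ) (x : E) (ω : Ω) : ℂ :=
  ∑ j ∈ Finset.range m, alphaHat c pX φ f X Z T n j ω * φ j x

/-- The `m`-term approximation `f_m = ∑_{j<m} α_j φ_j`. -/
def mApprox {E : Type*} [MeasureSpace E] (D : Set E) (f : E → ℝ) (φ : ℕ → E → ℂ)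
    (m : ℕ) (x : E) : ℂ :=
  ∑ j ∈ Finset.range m, coeff D f φ j * φ j x

/-- The integrated mean squared error `E[‖f - f̂_{n,m}‖²]`. -/
def intMSE {E Ω : Type*} [MeasureSpace E] [MeasurableSpace Ω] (P : Measure Ω)
    (D : Set E) (c : ℝ) (pX : E → ℝ) (φ : ℕ → E → ℂ) (f : E → ℝ)
    (X : ℕ → Ω → E) (Z T : ℕ → Ω → ℝ) (n m : ℕ) : ℝ :=
  ∫ ω, (∫ x in D, ‖(f x : ℂ) - fieldEst c pX φ f X Z T n m x ω‖ ^ 2) ∂P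

/-- The `m`-term approximation error `ε[f,m] = ∑_{j≥m} |α_j|²`. -/
def tailErr {E : Type*} [MeasureSpace E] (D : Set E) (f : E → ℝ) (φ : ℕ → E → ℂ)
    (m : ℕ) : ℝ :=
  ∑' j : ℕ, ‖coeff D f φ (m + j)‖ ^ 2

/-- The deployment distribution: density `p_X` (w.r.t. Lebesgue measure) on `D`. -/
def deployLaw {E : Type*} [MeasureSpace E] (D : Set E) (pX : E → ℝ) : Measure E :=
  (volume.restrict D).withDensity fun x => ENNReal.ofReal (pX x)

/-- The threshold distribution: uniform on `[-c, c]`. -/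
def threshLaw (c : ℝ) : Measure ℝ :=
  (ENNReal.ofReal (1 / (2 * c))) • volume.restrict (Set.Icc (-c) c)

end

section Aux
open Set

lemma sgn'_abs (u : ℝ) : |sgn' u| = 1 := by
  unfold sgn'; split <;> simp

lemma sgn'_sq (u : ℝ) : sgn' u ^ 2 = 1 := by
  unfold sgn'; split <;> norm_num

lemma measurable_sgn' : Measurable sgn' := by
  unfold sgn'
  exact Measurable.ite measurableSet_Ioi measurable_const measurable_const

lemma threshLaw_prob {c : ℝ} (hc : 0 < c) : IsProbabilityMeasure (threshLaw c) := by
  constructor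
  unfold threshLaw
  rw [Measure.smul_apply, Measure.restrict_apply MeasurableSet.univ, Set.univ_inter,
    Real.volume_Icc]
  rw [smul_eq_mul, ← ENNReal.ofReal_mul (by positivity)]
  rw [show 1 / (2*c) * (c - -c) = 1 by field_simp; ring]
  simp

lemma integral_sgn'_threshLaw {c : ℝ} (hc : 0 < c) {u : ℝ} (hu : u ∈ Set.Icc (-c) c) :
    ∫ t, sgn' (u - t) ∂(threshLaw c) = u / c := by
  have h1 : ∀ t : ℝ, sgn' (u - t) = Set.indicator (Set.Iio u) (fun _ => (2:ℝ)) t - 1 := by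
    intro t
    unfold sgn'
    by_cases h : t < u
    · rw [if_pos (by linarith), Set.indicator_of_mem (by exact h)]; norm_num
    · rw [if_neg (by push_neg at h ⊢; linarith), Set.indicator_of_notMem (by simpa using h)]
      norm_num
  unfold threshLaw
  rw [integral_smul_measure]
  simp only [h1]
  have hfin : IsFiniteMeasure (volume.restrict (Set.Icc (-c) c)) :=
    ⟨by rw [Measure.restrict_apply MeasurableSet.univ, Set.univ_inter, Real.volume_Icc]; exact ENNReal.ofReal_lt_top⟩
  have hint1 : Integrable (Set.indicator (Set.Iio u) (fun _ => (2:ℝ)))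
      (volume.restrict (Set.Icc (-c) c)) :=
    (integrable_const (2:ℝ)).indicator measurableSet_Iio
  rw [integral_sub hint1 (integrable_const 1)]
  rw [integral_indicator measurableSet_Iio, Measure.restrict_restrict measurableSet_Iio]
  have hIio : Set.Iio u ∩ Set.Icc (-c) c = Set.Ico (-c) u := by
    ext t
    simp only [Set.mem_inter_iff, Set.mem_Iio, Set.mem_Icc, Set.mem_Ico]
    constructor
    · rintro ⟨h1, h2, h3⟩; exact ⟨h2, h1⟩
    · rintro ⟨h2, h1⟩; exact ⟨h1, h2, le_trans h1.le hu.2⟩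
  rw [hIio]
  rw [setIntegral_const, setIntegral_const]
  rw [measureReal_def, measureReal_def, Real.volume_Ico, Real.volume_Icc]
  rw [ENNReal.toReal_ofReal (by linarith [hu.1] : (0:ℝ) ≤ u - -c),
    ENNReal.toReal_ofReal (by linarith : (0:ℝ) ≤ c - -c),
    ENNReal.toReal_ofReal (by positivity : (0:ℝ) ≤ 1/(2*c))]
  simp only [smul_eq_mul]
  field_simp
  ring

end Aux

section Key

/-- The per-observation integrand: `g_j(x,z,t) = conj(φ_j x)/pX x · sgn'(f x + z − t)`. -/
noncomputable def gfun {E : Type*} (pX : E → ℝ) (φ : ℕ → E → ℂ) (f : E → ℝ) (j : ℕ)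
    (p : E × ℝ × ℝ) : ℂ :=
  (starRingEnd ℂ) (φ j p.1) / (pX p.1 : ℂ) * ((sgn' (f p.1 + p.2.1 - p.2.2) : ℝ) : ℂ)

lemma measurable_gfun {E : Type*} [MeasurableSpace E] {pX : E → ℝ} {φ : ℕ → E → ℂ} {f : E → ℝ}
    (hpX : Measurable pX) (j : ℕ) (hφ : Measurable (φ j)) (hf : Measurable f) :
    Measurable (gfun pX φ f j) := by
  apply Measurable.mul
  · apply Measurable.div
    · exact (Complex.continuous_conj.measurable).comp (hφ.comp measurable_fst)
    · exact Complex.measurable_ofReal.comp (hpX.comp measurable_fst)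
  · exact Complex.measurable_ofReal.comp (measurable_sgn'.comp
      (((hf.comp measurable_fst).add (measurable_fst.comp measurable_snd)).sub
        (measurable_snd.comp measurable_snd)))

lemma norm_gfun {E : Type*} (pX : E → ℝ) (φ : ℕ → E → ℂ) (f : E → ℝ) (j : ℕ) (p : E × ℝ × ℝ) :
    ‖gfun pX φ f j p‖ = ‖φ j p.1‖ / |pX p.1| := by
  unfold gfun
  rw [norm_mul, norm_div]
  simp [Complex.norm_real, sgn'_abs]

lemma sq_norm_gfun {E : Type*} (pX : E → ℝ) (φ : ℕ → E → ℂ) (f : E → ℝ) (j : ℕ)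
    (p : E × ℝ × ℝ) : ‖gfun pX φ f j p‖ ^ 2 = ‖φ j p.1‖ ^ 2 / (pX p.1) ^ 2 := by
  rw [norm_gfun, div_pow, sq_abs]

end Key
section Deploy

variable {E : Type*} [MeasureSpace E] [MeasurableSpace E] {D : Set E} {pX : E → ℝ}

end Deploy

section Deploy2

variable {E : Type*} [MeasureSpace E] {D : Set E} {pX : E → ℝ}

lemma deployLaw_prob (hD : MeasurableSet D) (hpos : ∀ x ∈ D, 0 < pX x)
    (hone : (∫ x in D, pX x) = 1) :
    IsProbabilityMeasure (deployLaw D pX) := by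
  constructor
  unfold deployLaw
  rw [withDensity_apply _ MeasurableSet.univ, Measure.restrict_univ]
  have hint : Integrable pX (volume.restrict D) := by
    by_contra h
    rw [integral_undef h] at hone; norm_num at hone
  have h0 : 0 ≤ᵐ[volume.restrict D] pX :=
    (ae_restrict_iff' hD).2 (Filter.Eventually.of_forall fun x hx => (hpos x hx).le)
  rw [← ofReal_integral_eq_lintegral_ofReal hint h0, hone]
  simp

lemma deployLaw_ae_mem (hD : MeasurableSet D) : ∀ᵐ x ∂(deployLaw D pX), x ∈ D :=
  (withDensity_absolutelyContinuous _ _).ae_le (ae_restrict_mem hD)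

lemma integral_deployLaw {G : Type*} [NormedAddCommGroup G] [NormedSpace ℝ G]
    (hD : MeasurableSet D) (hpXmeas : Measurable pX) (hpos : ∀ x ∈ D, 0 < pX x) (g : E → G) :
    ∫ x, g x ∂(deployLaw D pX) = ∫ x in D, pX x • g x := by
  unfold deployLaw
  have heq : (fun x => ENNReal.ofReal (pX x)) = (fun x => ((pX x).toNNReal : ℝ≥0∞)) := rfl
  rw [heq, integral_withDensity_eq_integral_smul hpXmeas.real_toNNReal g]
  refine integral_congr_ae ?_
  filter_upwards [ae_restrict_mem hD] with x hx
  rw [NNReal.smul_def, Real.coe_toNNReal _ (hpos x hx).le]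

end Deploy2

section Marginal

lemma integral_comp_fst {α β G : Type*} [MeasurableSpace α] [MeasurableSpace β]
    [NormedAddCommGroup G] [NormedSpace ℝ G]
    (μ1 : Measure α) (μ2 : Measure β) [SFinite μ1] [IsProbabilityMeasure μ2] {h : α → G}
    (hm : AEStronglyMeasurable h μ1) :
    ∫ p, h p.1 ∂(μ1.prod μ2) = ∫ x, h x ∂μ1 := by
  have hmap : Measure.map Prod.fst (μ1.prod μ2) = μ1 := by
    rw [Measure.map_fst_prod, measure_univ, one_smul]
  calc ∫ p, h p.1 ∂(μ1.prod μ2) = ∫ x, h x ∂(Measure.map Prod.fst (μ1.prod μ2)) :=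
        (integral_map measurable_fst.aemeasurable (by rwa [hmap])).symm
    _ = ∫ x, h x ∂μ1 := by rw [hmap]

lemma integrable_comp_fst_iff {α β G : Type*} [MeasurableSpace α] [MeasurableSpace β]
    [NormedAddCommGroup G]
    (μ1 : Measure α) (μ2 : Measure β) [SFinite μ1] [IsProbabilityMeasure μ2] {h : α → G}
    (hm : AEStronglyMeasurable h μ1) :
    Integrable (fun p : α × β => h p.1) (μ1.prod μ2) ↔ Integrable h μ1 := by
  have hmap : Measure.map Prod.fst (μ1.prod μ2) = μ1 := by
    rw [Measure.map_fst_prod, measure_univ, one_smul]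
  rw [show (fun p : α × β => h p.1) = h ∘ Prod.fst from rfl,
    ← integrable_map_measure (by rwa [hmap]) measurable_fst.aemeasurable, hmap]

end Marginal
section GfunInt

variable {E : Type*} [MeasureSpace E] {D : Set E} {pX : E → ℝ} {φ : ℕ → E → ℂ}
  {f : E → ℝ} {ν : ℝ} {j : ℕ}

lemma integrable_sq_norm_gfun (μ2 : Measure (ℝ × ℝ)) [IsProbabilityMeasure μ2]
    (hD : MeasurableSet D)
    (hpXmeas : Measurable pX) (hpos : ∀ x ∈ D, 0 < pX x) (hν : 0 < ν)
    (hνinf : ∀ x ∈ D, ν ≤ pX x) (hφm : Measurable (φ j))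
    (hφL2 : MemLp (φ j) 2 (volume.restrict D))
    [SFinite (deployLaw D pX)] :
    Integrable (fun p => ‖gfun pX φ f j p‖ ^ 2) ((deployLaw D pX).prod μ2) := by
  have h2m : Measurable (fun x => ‖φ j x‖ ^ 2 / pX x ^ 2) :=
    (hφm.norm.pow_const 2).div (hpXmeas.pow_const 2)
  have hrw : (fun p => ‖gfun pX φ f j p‖ ^ 2)
      = fun p : E × ℝ × ℝ => ‖φ j p.1‖ ^ 2 / pX p.1 ^ 2 := by
    funext p; exact sq_norm_gfun pX φ f j p
  rw [hrw]
  rw [integrable_comp_fst_iff _ _ h2m.aestronglyMeasurable]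
  unfold deployLaw
  rw [integrable_withDensity_iff hpXmeas.ennreal_ofReal
    (Filter.Eventually.of_forall fun x => ENNReal.ofReal_lt_top)]
  refine Integrable.mono' (g := fun x => (1/ν) * ‖φ j x‖ ^ 2)
    (((memLp_two_iff_integrable_sq_norm hφL2.1).1 hφL2).const_mul _)
    (h2m.mul (hpXmeas.ennreal_ofReal.ennreal_toReal)).aestronglyMeasurable ?_
  filter_upwards [ae_restrict_mem hD] with x hx
  have hp : 0 < pX x := hpos x hx
  rw [ENNReal.toReal_ofReal hp.le]
  have h1 : ‖φ j x‖ ^ 2 / pX x ^ 2 * pX x = ‖φ j x‖ ^ 2 / pX x := by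
    field_simp
  rw [Real.norm_eq_abs, abs_of_nonneg (by positivity), h1, one_div, ← div_eq_inv_mul]
  exact div_le_div_of_nonneg_left (by positivity) hν (hνinf x hx)

lemma integral_sq_norm_gfun_le (μ2 : Measure (ℝ × ℝ)) [IsProbabilityMeasure μ2]
    (hD : MeasurableSet D)
    (hpXmeas : Measurable pX) (hpos : ∀ x ∈ D, 0 < pX x) (hν : 0 < ν)
    (hνinf : ∀ x ∈ D, ν ≤ pX x) (hφm : Measurable (φ j))
    (hφL2 : MemLp (φ j) 2 (volume.restrict D))
    (hφnorm : (∫ x in D, ‖φ j x‖ ^ 2) ≤ 1)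
    [SFinite (deployLaw D pX)] :
    (∫ p, ‖gfun pX φ f j p‖ ^ 2 ∂((deployLaw D pX).prod μ2)) ≤ 1 / ν := by
  have h2m : Measurable (fun x => ‖φ j x‖ ^ 2 / pX x ^ 2) :=
    (hφm.norm.pow_const 2).div (hpXmeas.pow_const 2)
  have hrw : (fun p => ‖gfun pX φ f j p‖ ^ 2)
      = fun p : E × ℝ × ℝ => ‖φ j p.1‖ ^ 2 / pX p.1 ^ 2 := by
    funext p; exact sq_norm_gfun pX φ f j p
  rw [hrw, integral_comp_fst _ _ h2m.aestronglyMeasurable,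
    integral_deployLaw hD hpXmeas hpos]
  have hle : (∫ x in D, pX x • (‖φ j x‖ ^ 2 / pX x ^ 2))
      ≤ ∫ x in D, (1/ν) * ‖φ j x‖ ^ 2 := by
    refine integral_mono_of_nonneg ?_
      (((memLp_two_iff_integrable_sq_norm hφL2.1).1 hφL2).const_mul _) ?_
    · filter_upwards [ae_restrict_mem hD] with x hx
      have := hpos x hx; positivity
    · filter_upwards [ae_restrict_mem hD] with x hx
      have hp : 0 < pX x := hpos x hx
      have h1 : pX x • (‖φ j x‖ ^ 2 / pX x ^ 2) = ‖φ j x‖ ^ 2 / pX x := by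
        rw [smul_eq_mul]; field_simp
      rw [h1, one_div, ← div_eq_inv_mul]
      exact div_le_div_of_nonneg_left (by positivity) hν (hνinf x hx)
  refine hle.trans ?_
  rw [integral_const_mul]
  rw [one_div]
  calc ν⁻¹ * ∫ x in D, ‖φ j x‖ ^ 2 ≤ ν⁻¹ * 1 :=
        mul_le_mul_of_nonneg_left hφnorm (by positivity)
    _ = ν⁻¹ := mul_one _

lemma memℒp_gfun (μ2 : Measure (ℝ × ℝ)) [IsProbabilityMeasure μ2]
    (hD : MeasurableSet D)
    (hpXmeas : Measurable pX) (hf : Measurable f) (hpos : ∀ x ∈ D, 0 < pX x) (hν : 0 < ν)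
    (hνinf : ∀ x ∈ D, ν ≤ pX x) (hφm : Measurable (φ j))
    (hφL2 : MemLp (φ j) 2 (volume.restrict D))
    [SFinite (deployLaw D pX)] :
    MemLp (gfun pX φ f j) 2 ((deployLaw D pX).prod μ2) :=
  (memLp_two_iff_integrable_sq_norm
      (measurable_gfun hpXmeas j hφm hf).aestronglyMeasurable).2
    (integrable_sq_norm_gfun μ2 hD hpXmeas hpos hν hνinf hφm hφL2)

end GfunInt
section GfunMean

variable {E : Type*} [MeasureSpace E] {D : Set E} {pX : E → ℝ} {φ : ℕ → E → ℂ}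
  {f : E → ℝ} {ν a b c : ℝ} {j : ℕ} {μZ : Measure ℝ}

lemma integral_gfun_eq [IsProbabilityMeasure μZ]
    (hD : MeasurableSet D)
    (ha : 0 < a) (hb : 0 < b) (hc : c = a + b)
    (hfmeas : Measurable f) (hfbd : ∀ x ∈ D, f x ∈ Set.Icc (-a) a)
    (hpXmeas : Measurable pX) (hpos : ∀ x ∈ D, 0 < pX x)
    (hone : (∫ x in D, pX x) = 1)
    (hν : 0 < ν) (hνinf : ∀ x ∈ D, ν ≤ pX x)
    (hφm : Measurable (φ j)) (hφL2 : MemLp (φ j) 2 (volume.restrict D))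
    (hZmean : (∫ z, z ∂μZ) = 0) (hZsupp : μZ (Set.Icc (-b) b)ᶜ = 0) :
    (∫ p, gfun pX φ f j p ∂((deployLaw D pX).prod (μZ.prod (threshLaw c)))) =
      coeff D f φ j / c := by
  have hc0 : 0 < c := by rw [hc]; linarith
  haveI := threshLaw_prob hc0
  haveI hμ1 := deployLaw_prob hD hpos hone
  haveI : IsProbabilityMeasure (μZ.prod (threshLaw c)) := by infer_instance
  have hZae : ∀ᵐ z ∂μZ, z ∈ Set.Icc (-b) b := MeasureTheory.mem_ae_iff.2 hZsupp
  -- integrability of gfun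
  have hgm : Measurable (gfun pX φ f j) := measurable_gfun hpXmeas j hφm hfmeas
  have hint : Integrable (gfun pX φ f j) ((deployLaw D pX).prod (μZ.prod (threshLaw c))) :=
    memLp_one_iff_integrable.1
      ((memℒp_gfun _ hD hpXmeas hfmeas hpos hν hνinf hφm hφL2).mono_exponent one_le_two)
  rw [MeasureTheory.integral_prod _ hint]
  -- inner integral computation, a.e. in x
  have step : ∀ᵐ x ∂(deployLaw D pX),
      (∫ q, gfun pX φ f j (x, q) ∂(μZ.prod (threshLaw c)))
        = (starRingEnd ℂ) (φ j x) / (pX x : ℂ) * ((f x / c : ℝ) : ℂ) := by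
    filter_upwards [deployLaw_ae_mem hD] with x hx
    have hsm : Measurable (fun q : ℝ × ℝ => sgn' (f x + q.1 - q.2)) :=
      measurable_sgn'.comp ((measurable_const.add measurable_fst).sub measurable_snd)
    have hsint : Integrable (fun q : ℝ × ℝ => sgn' (f x + q.1 - q.2))
        (μZ.prod (threshLaw c)) := by
      refine Integrable.mono' (integrable_const 1) hsm.aestronglyMeasurable ?_
      refine Filter.Eventually.of_forall fun q => ?_
      rw [Real.norm_eq_abs, sgn'_abs]
    have h1 : (∫ q, gfun pX φ f j (x, q) ∂(μZ.prod (threshLaw c)))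
        = (starRingEnd ℂ) (φ j x) / (pX x : ℂ) *
          ∫ q : ℝ × ℝ, ((sgn' (f x + q.1 - q.2) : ℝ) : ℂ) ∂(μZ.prod (threshLaw c)) := by
      rw [← integral_const_mul]
      rfl
    rw [h1]
    congr 1
    have hIof : (∫ q : ℝ × ℝ, ((sgn' (f x + q.1 - q.2) : ℝ) : ℂ) ∂(μZ.prod (threshLaw c)))
        = ((∫ q : ℝ × ℝ, sgn' (f x + q.1 - q.2) ∂(μZ.prod (threshLaw c)) : ℝ) : ℂ) :=
      integral_ofReal (𝕜 := ℂ)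
    rw [hIof, Complex.ofReal_inj]
    rw [MeasureTheory.integral_prod _ hsint]
    have h2 : ∀ᵐ z ∂μZ, (∫ t, sgn' (f x + z - t) ∂(threshLaw c)) = (f x + z) / c := by
      filter_upwards [hZae] with z hz
      refine integral_sgn'_threshLaw hc0 ?_
      have h3 := hfbd x hx
      simp only [Set.mem_Icc] at h3 hz ⊢
      constructor <;> [linarith [h3.1, hz.1]; linarith [h3.2, hz.2]]
    rw [integral_congr_ae h2]
    have hZint : Integrable (fun z : ℝ => z) μZ := by
      refine Integrable.mono' (integrable_const b) aestronglyMeasurable_id ?_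
      filter_upwards [hZae] with z hz
      rw [Real.norm_eq_abs, abs_le]
      exact ⟨hz.1, hz.2⟩
    have : (∫ z, (f x + z) / c ∂μZ) = (∫ z, (f x + z) ∂μZ) / c := integral_div c _
    rw [this, integral_add (integrable_const _) hZint, hZmean, integral_const]
    simp
  rw [integral_congr_ae step, integral_deployLaw hD hpXmeas hpos]
  have hfin : (∫ x in D,
      pX x • ((starRingEnd ℂ) (φ j x) / (pX x : ℂ) * ((f x / c : ℝ) : ℂ)))
      = ∫ x in D, ((f x : ℂ) * (starRingEnd ℂ) (φ j x)) / (c : ℂ) := by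
    refine integral_congr_ae ?_
    filter_upwards [ae_restrict_mem hD] with x hx
    have hp : (pX x : ℂ) ≠ 0 := by
      exact_mod_cast (hpos x hx).ne'
    have hcc : (c : ℂ) ≠ 0 := by exact_mod_cast hc0.ne'
    rw [Complex.real_smul]
    push_cast
    field_simp
  rw [hfin, integral_div]
  rfl

end GfunMean
section VarianceBound

open RCLike

lemma sum_centered_sq_le {Ω : Type*} [MeasurableSpace Ω] (P : Measure Ω) [IsProbabilityMeasure P]
    (W : ℕ → Ω → ℂ) (n : ℕ) (m : ℂ) (κ : ℝ)
    (hL2 : ∀ i, MemLp (W i) 2 P)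
    (hmean : ∀ i, (∫ ω, W i ω ∂P) = m)
    (hmom : ∀ i, (∫ ω, ‖W i ω‖ ^ 2 ∂P) ≤ κ)
    (hind : Set.Pairwise ↑(Finset.range n) (fun i j => IndepFun (W i) (W j) P)) :
    (∫ ω, ‖(∑ i ∈ Finset.range n, W i ω) - (n : ℂ) * m‖ ^ 2 ∂P) ≤ n * κ := by
  classical
  set R : ℕ → Ω → ℝ := fun i ω => RCLike.re (W i ω) with hR
  set I : ℕ → Ω → ℝ := fun i ω => RCLike.im (W i ω) with hI
  have hRL2 : ∀ i, MemLp (R i) 2 P := fun i => (hL2 i).re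
  have hIL2 : ∀ i, MemLp (I i) 2 P := fun i => (hL2 i).im
  have hint : ∀ i, Integrable (W i) P := fun i => (hL2 i).integrable one_le_two
  have hRmean : ∀ i, (∫ ω, R i ω ∂P) = RCLike.re m := fun i => by
    rw [hR]; simp only
    rw [integral_re (hint i), hmean i]
  have hImean : ∀ i, (∫ ω, I i ω ∂P) = RCLike.im m := fun i => by
    rw [hI]; simp only
    rw [integral_im (hint i), hmean i]
  set SR : Ω → ℝ := fun ω => ∑ i ∈ Finset.range n, R i ω with hSR
  set SI : Ω → ℝ := fun ω => ∑ i ∈ Finset.range n, I i ω with hSI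
  have hSRL2 : MemLp SR 2 P := by
    have h := memLp_finset_sum' (μ := P) (Finset.range n) (fun i (_ : i ∈ Finset.range n) => hRL2 i)
    have he : SR = ∑ i ∈ Finset.range n, R i := by funext ω; simp [hSR]
    rwa [he]
  have hSIL2 : MemLp SI 2 P := by
    have h := memLp_finset_sum' (μ := P) (Finset.range n) (fun i (_ : i ∈ Finset.range n) => hIL2 i)
    have he : SI = ∑ i ∈ Finset.range n, I i := by funext ω; simp [hSI]
    rwa [he]
  have hSRmean : (∫ ω, SR ω ∂P) = n * RCLike.re m := by
    rw [hSR]; simp only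
    rw [integral_finset_sum _ (fun i _ => (hRL2 i).integrable one_le_two)]
    simp [hRmean, Finset.sum_const]
  have hSImean : (∫ ω, SI ω ∂P) = n * RCLike.im m := by
    rw [hSI]; simp only
    rw [integral_finset_sum _ (fun i _ => (hIL2 i).integrable one_le_two)]
    simp [hImean, Finset.sum_const]
  -- pointwise: ‖S ω - n m‖² = (SR ω - n re m)² + (SI ω - n im m)²
  have hpt : ∀ ω, ‖(∑ i ∈ Finset.range n, W i ω) - (n : ℂ) * m‖ ^ 2
      = (SR ω - n * RCLike.re m) ^ 2 + (SI ω - n * RCLike.im m) ^ 2 := by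
    intro ω
    rw [RCLike.norm_sq_eq_def]
    have hre : RCLike.re ((∑ i ∈ Finset.range n, W i ω) - (n : ℂ) * m)
        = SR ω - n * RCLike.re m := by
      rw [map_sub, map_sum]
      simp [hSR, hR, RCLike.mul_re, RCLike.natCast_re, RCLike.natCast_im]
    have him : RCLike.im ((∑ i ∈ Finset.range n, W i ω) - (n : ℂ) * m)
        = SI ω - n * RCLike.im m := by
      rw [map_sub, map_sum]
      simp [hSI, hI, RCLike.mul_im, RCLike.natCast_re, RCLike.natCast_im]
    rw [hre, him]; ring
  simp only [hpt]
  -- split the integral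
  have hSRint : Integrable (fun ω => (SR ω - n * RCLike.re m) ^ 2) P := by
    have : MemLp (fun ω => SR ω - n * RCLike.re m) 2 P := hSRL2.sub (memLp_const _)
    exact this.integrable_sq
  have hSIint : Integrable (fun ω => (SI ω - n * RCLike.im m) ^ 2) P := by
    have : MemLp (fun ω => SI ω - n * RCLike.im m) 2 P := hSIL2.sub (memLp_const _)
    exact this.integrable_sq
  rw [integral_add hSRint hSIint]
  -- identify with variances
  have hvarR : (∫ ω, (SR ω - n * RCLike.re m) ^ 2 ∂P) = variance SR P := by
    rw [variance_eq_integral hSRL2.1.aemeasurable]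
    refine integral_congr_ae (Filter.Eventually.of_forall fun ω => ?_)
    simp [hSRmean]
  have hvarI : (∫ ω, (SI ω - n * RCLike.im m) ^ 2 ∂P) = variance SI P := by
    rw [variance_eq_integral hSIL2.1.aemeasurable]
    refine integral_congr_ae (Filter.Eventually.of_forall fun ω => ?_)
    simp [hSImean]
  rw [hvarR, hvarI]
  -- variance of sums
  have hindR : Set.Pairwise ↑(Finset.range n) (fun i j => IndepFun (R i) (R j) P) := by
    intro i hi j hj hij
    exact (hind hi hj hij).comp (RCLike.measurable_re) (RCLike.measurable_re)
  have hindI : Set.Pairwise ↑(Finset.range n) (fun i j => IndepFun (I i) (I j) P) := by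
    intro i hi j hj hij
    exact (hind hi hj hij).comp (RCLike.measurable_im) (RCLike.measurable_im)
  have hVR : variance SR P = ∑ i ∈ Finset.range n, variance (R i) P := by
    have h := IndepFun.variance_sum (μ := P) (fun i (_ : i ∈ Finset.range n) => hRL2 i) hindR
    have he : SR = ∑ i ∈ Finset.range n, R i := by funext ω; simp [hSR]
    rwa [he]
  have hVI : variance SI P = ∑ i ∈ Finset.range n, variance (I i) P := by
    have h := IndepFun.variance_sum (μ := P) (fun i (_ : i ∈ Finset.range n) => hIL2 i) hindI
    have he : SI = ∑ i ∈ Finset.range n, I i := by funext ω; simp [hSI]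
    rwa [he]
  rw [hVR, hVI, ← Finset.sum_add_distrib]
  -- bound each variance by second moment
  have hbound : ∀ i ∈ Finset.range n,
      variance (R i) P + variance (I i) P ≤ ∫ ω, ‖W i ω‖ ^ 2 ∂P := by
    intro i _
    have h1 : variance (R i) P ≤ ∫ ω, R i ω ^ 2 ∂P := by
      have := variance_le_expectation_sq (μ := P) (hRL2 i).1
      simpa using this
    have h2 : variance (I i) P ≤ ∫ ω, I i ω ^ 2 ∂P := by
      have := variance_le_expectation_sq (μ := P) (hIL2 i).1
      simpa using this
    have h3 : (∫ ω, R i ω ^ 2 ∂P) + (∫ ω, I i ω ^ 2 ∂P) = ∫ ω, ‖W i ω‖ ^ 2 ∂P := by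
      rw [← integral_add (hRL2 i).integrable_sq (hIL2 i).integrable_sq]
      refine integral_congr_ae (Filter.Eventually.of_forall fun ω => ?_)
      show R i ω ^ 2 + I i ω ^ 2 = ‖W i ω‖ ^ 2
      rw [RCLike.norm_sq_eq_def, hR, hI]
      ring
    linarith
  calc (∑ i ∈ Finset.range n, (variance (R i) P + variance (I i) P))
      ≤ ∑ i ∈ Finset.range n, ∫ ω, ‖W i ω‖ ^ 2 ∂P := Finset.sum_le_sum hbound
    _ ≤ ∑ _i ∈ Finset.range n, κ := Finset.sum_le_sum (fun i _ => hmom i)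
    _ = n * κ := by simp [mul_comm]

end VarianceBound
section Expansion

lemma memℒp_conj {α : Type*} [MeasurableSpace α] {μ : Measure α} {g : α → ℂ}
    (hg : MemLp g 2 μ) : MemLp (fun x => (starRingEnd ℂ) (g x)) 2 μ := by
  refine MemLp.of_le hg (Complex.continuous_conj.comp_aestronglyMeasurable hg.1) ?_
  exact Filter.Eventually.of_forall fun x => by simp

lemma integrable_mul_L2 {α : Type*} [MeasurableSpace α] {μ : Measure α} {g h : α → ℂ}
    (hg : MemLp g 2 μ) (hh : MemLp h 2 μ) : Integrable (fun x => g x * h x) μ := by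
  have hs : MemLp (g • h) 1 μ := MemLp.smul hh hg (hpqr := ⟨by rw [inv_one]; exact ENNReal.inv_two_add_inv_two⟩)
  exact memLp_one_iff_integrable.1 hs

lemma l2_expansion {E : Type*} [MeasureSpace E] {D : Set E} {φ : ℕ → E → ℂ} (k : ℕ)
    (hφL2 : ∀ j, MemLp (φ j) 2 (volume.restrict D))
    (hON : ∀ j < k, ∀ l < k,
      (∫ x in D, φ j x * (starRingEnd ℂ) (φ l x)) = if j = l then 1 else 0)
    (dcoef : ℕ → ℂ) :
    (∫ x in D, ‖∑ j ∈ Finset.range k, dcoef j * φ j x‖ ^ 2)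
      = ∑ j ∈ Finset.range k, ‖dcoef j‖ ^ 2 := by
  classical
  set v : E → ℂ := fun x => ∑ j ∈ Finset.range k, dcoef j * φ j x with hv
  have hterm : ∀ j l, Integrable (fun x => φ j x * (starRingEnd ℂ) (φ l x))
      (volume.restrict D) :=
    fun j l => integrable_mul_L2 (hφL2 j) (memℒp_conj (hφL2 l))
  have hexp : ∀ x, v x * (starRingEnd ℂ) (v x)
      = ∑ j ∈ Finset.range k, ∑ l ∈ Finset.range k,
          (dcoef j * (starRingEnd ℂ) (dcoef l)) * (φ j x * (starRingEnd ℂ) (φ l x)) := by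
    intro x
    rw [hv]
    simp only [map_sum, map_mul, Finset.sum_mul_sum]
    refine Finset.sum_congr rfl fun j _ => Finset.sum_congr rfl fun l _ => by ring
  have hI : (∫ x in D, v x * (starRingEnd ℂ) (v x))
      = ∑ j ∈ Finset.range k, ∑ l ∈ Finset.range k,
          (dcoef j * (starRingEnd ℂ) (dcoef l)) * ∫ x in D, φ j x * (starRingEnd ℂ) (φ l x) := by
    simp_rw [hexp]
    rw [integral_finset_sum _ (fun j _ => integrable_finset_sum _
      (fun l _ => (hterm j l).const_mul _))]
    refine Finset.sum_congr rfl fun j _ => ?_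
    rw [integral_finset_sum _ (fun l _ => (hterm j l).const_mul _)]
    exact Finset.sum_congr rfl fun l _ => integral_const_mul _ _
  have hdiag : (∫ x in D, v x * (starRingEnd ℂ) (v x))
      = ((∑ j ∈ Finset.range k, ‖dcoef j‖ ^ 2 : ℝ) : ℂ) := by
    rw [hI]
    have : ∀ j ∈ Finset.range k, ∀ l ∈ Finset.range k,
        (dcoef j * (starRingEnd ℂ) (dcoef l)) * ∫ x in D, φ j x * (starRingEnd ℂ) (φ l x)
          = if j = l then ((‖dcoef j‖ ^ 2 : ℝ) : ℂ) else 0 := by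
      intro j hj l hl
      rw [hON j (Finset.mem_range.1 hj) l (Finset.mem_range.1 hl)]
      by_cases h : j = l
      · subst h
        rw [if_pos rfl, if_pos rfl, mul_one, Complex.mul_conj, Complex.ofReal_inj,
          Complex.normSq_eq_norm_sq]
      · rw [if_neg h, if_neg h, mul_zero]
    rw [Finset.sum_congr rfl fun j hj => Finset.sum_congr rfl fun l hl => this j hj l hl,
      Complex.ofReal_sum]
    refine Finset.sum_congr rfl fun j hj => ?_
    rw [Finset.sum_ite_eq (Finset.range k) j fun _ => ((‖dcoef j‖ ^ 2 : ℝ) : ℂ), if_pos hj]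
  have hcast : (∫ x in D, ((‖v x‖ ^ 2 : ℝ) : ℂ))
      = ((∫ x in D, ‖v x‖ ^ 2 : ℝ) : ℂ) := integral_ofReal (𝕜 := ℂ)
  have hvv : ∀ x, v x * (starRingEnd ℂ) (v x) = ((‖v x‖ ^ 2 : ℝ) : ℂ) := by
    intro x
    rw [Complex.mul_conj, Complex.normSq_eq_norm_sq]
  rw [← Complex.ofReal_inj, ← hcast]
  calc ((∫ x in D, ((‖v x‖ ^ 2 : ℝ) : ℂ)))
      = ∫ x in D, v x * (starRingEnd ℂ) (v x) := by
        exact integral_congr_ae (Filter.Eventually.of_forall fun x => (hvv x).symm)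
    _ = _ := by rw [hdiag]

end Expansion

/-- **Decay rate of the integrated MSE for a finite-dimensional field class
(Corollary 3):** with truncation `m = k`, `E[‖f − f̂_(n,k)‖²] ≤ c² k/(n ν) = O(1/n)`. -/
theorem stmt16
    (k : ℕ) (hk : 1 ≤ k)
    {d : ℕ} {D : Set (Fin d → ℝ)} (hDcomp : IsCompact D)
    (hDpos : 0 < volume D) (hDfin : volume D < ⊤)
    {a b c : ℝ} (ha : 0 < a) (hb : 0 < b) (hc : c = a + b)
    {f : (Fin d → ℝ) → ℝ} (hfmeas : Measurable f)
    (hfbd : ∀ x ∈ D, f x ∈ Set.Icc (-a) a)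
    {pX : (Fin d → ℝ) → ℝ} (hpXmeas : Measurable pX)
    (hpXpos : ∀ x ∈ D, 0 < pX x) (hpXone : (∫ x in D, pX x) = 1)
    {φ : ℕ → (Fin d → ℝ) → ℂ} (hφmeas : ∀ j, Measurable (φ j))
    (hφL2 : ∀ j, MemLp (φ j) 2 (volume.restrict D))
    (hON : ∀ j < k, ∀ l < k, (∫ x in D, φ j x * (starRingEnd ℂ) (φ l x)) = if j = l then 1 else 0)
    {Ω : Type*} [MeasurableSpace Ω] (P : Measure Ω) [IsProbabilityMeasure P]
    (X : ℕ → Ω → (Fin d → ℝ)) (Z T : ℕ → Ω → ℝ)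
    (hXmeas : ∀ i, Measurable (X i)) (hZmeas : ∀ i, Measurable (Z i))
    (hTmeas : ∀ i, Measurable (T i))
    (μZ : Measure ℝ) [IsProbabilityMeasure μZ]
    (hZmean : (∫ z, z ∂μZ) = 0) (hZsupp : μZ (Set.Icc (-b) b)ᶜ = 0)
    (hlaw : ∀ i, Measure.map (fun ω => (X i ω, Z i ω, T i ω)) P =
      (deployLaw D pX).prod (μZ.prod (threshLaw c)))
    (hiid : iIndepFun (fun i ω => (X i ω, Z i ω, T i ω)) P)
    {ν : ℝ} (hν : 0 < ν) (hνinf : ∀ x ∈ D, ν ≤ pX x)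
    (hspan : ∀ᵐ x ∂(volume.restrict D),
      (f x : ℂ) = ∑ j ∈ Finset.range k, coeff D f φ j * φ j x) :
    (∀ n : ℕ, 0 < n →
      intMSE P D c pX φ f X Z T n k ≤ c ^ 2 * k / (n * ν))
    ∧ ∃ K : ℝ, ∀ n : ℕ, 0 < n →
        intMSE P D c pX φ f X Z T n k ≤ K / n := by
  have hc0 : 0 < c := by rw [hc]; linarith
  have hD : MeasurableSet D := hDcomp.measurableSet
  haveI := threshLaw_prob hc0
  haveI hμ1P := deployLaw_prob hD hpXpos hpXone
  set μ3 : Measure ((Fin d → ℝ) × ℝ × ℝ) := (deployLaw D pX).prod (μZ.prod (threshLaw c))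
    with hμ3
  haveI : IsProbabilityMeasure μ3 := by rw [hμ3]; infer_instance
  -- normalization of φ j
  have hφnorm : ∀ j, j < k → (∫ x in D, ‖φ j x‖ ^ 2) = 1 := by
    intro j hj
    have h := hON j hj j hj
    rw [if_pos rfl] at h
    have h2 : (∫ x in D, φ j x * (starRingEnd ℂ) (φ j x))
        = ∫ x in D, ((‖φ j x‖ ^ 2 : ℝ) : ℂ) := by
      refine integral_congr_ae (Filter.Eventually.of_forall fun x => ?_)
      show φ j x * (starRingEnd ℂ) (φ j x) = ((‖φ j x‖ ^ 2 : ℝ) : ℂ)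
      rw [Complex.mul_conj, Complex.ofReal_inj, Complex.normSq_eq_norm_sq]
    have hcast : (∫ x in D, ((‖φ j x‖ ^ 2 : ℝ) : ℂ))
        = ((∫ x in D, ‖φ j x‖ ^ 2 : ℝ) : ℂ) := integral_ofReal (𝕜 := ℂ)
    rw [h2, hcast] at h
    exact_mod_cast h
  -- the sensor-level random variables
  set W : ℕ → ℕ → Ω → ℂ :=
    fun j i => gfun pX φ f j ∘ (fun ω => (X i ω, Z i ω, T i ω)) with hWdef
  have htm : ∀ i, Measurable (fun ω => (X i ω, Z i ω, T i ω)) :=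
    fun i => (hXmeas i).prodMk ((hZmeas i).prodMk (hTmeas i))
  have hgm : ∀ j, Measurable (gfun pX φ f j) :=
    fun j => measurable_gfun hpXmeas j (hφmeas j) hfmeas
  have hgL2 : ∀ j, j < k → MemLp (gfun pX φ f j) 2 μ3 := fun j hj =>
    memℒp_gfun _ hD hpXmeas hfmeas hpXpos hν hνinf (hφmeas j) (hφL2 j)
  have hWL2 : ∀ j, j < k → ∀ i, MemLp (W j i) 2 P := by
    intro j hj i
    exact (memLp_map_measure_iff (f := fun ω => (X i ω, Z i ω, T i ω))
      (g := gfun pX φ f j) (p := 2) (μ := P)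
      (by rw [hlaw i]; exact (hgm j).aestronglyMeasurable) (htm i).aemeasurable).1
      (by rw [hlaw i]; exact hgL2 j hj)
  have hWmean : ∀ j, j < k → ∀ i, (∫ ω, W j i ω ∂P) = coeff D f φ j / c := by
    intro j hj i
    have h1 : (∫ ω, W j i ω ∂P)
        = ∫ p, gfun pX φ f j p ∂(Measure.map (fun ω => (X i ω, Z i ω, T i ω)) P) := by
      rw [integral_map (htm i).aemeasurable (by rw [hlaw i]; exact (hgm j).aestronglyMeasurable)]
      rfl
    rw [h1, hlaw i]
    exact integral_gfun_eq hD ha hb hc hfmeas hfbd hpXmeas hpXpos hpXone hν hνinf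
      (hφmeas j) (hφL2 j) hZmean hZsupp
  have hWmom : ∀ j, j < k → ∀ i, (∫ ω, ‖W j i ω‖ ^ 2 ∂P) ≤ 1 / ν := by
    intro j hj i
    have h1 : (∫ ω, ‖W j i ω‖ ^ 2 ∂P)
        = ∫ p, ‖gfun pX φ f j p‖ ^ 2 ∂(Measure.map (fun ω => (X i ω, Z i ω, T i ω)) P) := by
      rw [integral_map (htm i).aemeasurable
        (by rw [hlaw i]; exact ((hgm j).norm.pow_const 2).aestronglyMeasurable)]
      rfl
    rw [h1, hlaw i]
    exact integral_sq_norm_gfun_le _ hD hpXmeas hpXpos hν hνinf (hφmeas j) (hφL2 j)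
      (le_of_eq (hφnorm j hj))
  have hWind : ∀ j (n : ℕ),
      Set.Pairwise ↑(Finset.range n) (fun i i' => IndepFun (W j i) (W j i') P) := by
    intro j n i hi i' hi' hii'
    exact (hiid.comp (fun _ => gfun pX φ f j) (fun _ => hgm j)).indepFun hii'
  -- the per-coefficient error bound
  have hEj : ∀ (n : ℕ), 0 < n → ∀ j, j < k →
      (∫ ω, ‖coeff D f φ j - alphaHat c pX φ f X Z T n j ω‖ ^ 2 ∂P) ≤ c ^ 2 / (n * ν) := by
    intro n hn j hj
    have hkey := sum_centered_sq_le P (W j) n (coeff D f φ j / c) (1 / ν)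
      (fun i => hWL2 j hj i) (fun i => hWmean j hj i) (fun i => hWmom j hj i) (hWind j n)
    have hn0 : (n : ℝ) ≠ 0 := Nat.cast_ne_zero.2 hn.ne'
    have hnC : (n : ℂ) ≠ 0 := Nat.cast_ne_zero.2 hn.ne'
    have hcC : (c : ℂ) ≠ 0 := by exact_mod_cast hc0.ne'
    have hpt : ∀ ω, ‖coeff D f φ j - alphaHat c pX φ f X Z T n j ω‖ ^ 2
        = (c / n) ^ 2 *
          ‖(∑ i ∈ Finset.range n, W j i ω) - (n : ℂ) * (coeff D f φ j / c)‖ ^ 2 := by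
      intro ω
      have hsum : alphaHat c pX φ f X Z T n j ω
          = ((c : ℂ) / (n : ℂ)) * ∑ i ∈ Finset.range n, W j i ω := rfl
      have h2 : coeff D f φ j - alphaHat c pX φ f X Z T n j ω
          = ((c : ℂ) / (n : ℂ)) *
            ((n : ℂ) * (coeff D f φ j / c) - ∑ i ∈ Finset.range n, W j i ω) := by
        rw [hsum]
        field_simp
      rw [h2, norm_mul, mul_pow, norm_sub_rev]
      congr 2
      rw [norm_div, Complex.norm_natCast, Complex.norm_real, Real.norm_eq_abs, abs_of_pos hc0]
    calc (∫ ω, ‖coeff D f φ j - alphaHat c pX φ f X Z T n j ω‖ ^ 2 ∂P)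
        = (c / n) ^ 2 * ∫ ω,
            ‖(∑ i ∈ Finset.range n, W j i ω) - (n : ℂ) * (coeff D f φ j / c)‖ ^ 2 ∂P := by
          rw [← integral_const_mul]
          exact integral_congr_ae (Filter.Eventually.of_forall fun ω => hpt ω)
      _ ≤ (c / n) ^ 2 * (n * (1 / ν)) := by
          refine mul_le_mul_of_nonneg_left hkey (by positivity)
      _ = c ^ 2 / (n * ν) := by field_simp
  -- integrability of the per-coefficient errors
  have hdL2 : ∀ (n : ℕ), 0 < n → ∀ j, j < k →
      Integrable (fun ω => ‖coeff D f φ j - alphaHat c pX φ f X Z T n j ω‖ ^ 2) P := by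
    intro n hn j hj
    have hα : MemLp (fun ω => alphaHat c pX φ f X Z T n j ω) 2 P := by
      have hsum : MemLp (fun ω => ∑ i ∈ Finset.range n, W j i ω) 2 P := by
        have h := memLp_finset_sum' (μ := P) (Finset.range n)
          (fun i (_ : i ∈ Finset.range n) => hWL2 j hj i)
        have he : (fun ω => ∑ i ∈ Finset.range n, W j i ω)
            = ∑ i ∈ Finset.range n, W j i := by funext ω; simp
        rwa [he]
      exact hsum.const_mul _
    have hd : MemLp (fun ω => coeff D f φ j - alphaHat c pX φ f X Z T n j ω) 2 P :=
      (memLp_const _).sub hα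
    exact (memLp_two_iff_integrable_sq_norm hd.1).1 hd
  -- spatial expansion
  have hsp : ∀ (n : ℕ) (ω : Ω),
      (∫ x in D, ‖(f x : ℂ) - fieldEst c pX φ f X Z T n k x ω‖ ^ 2)
        = ∑ j ∈ Finset.range k, ‖coeff D f φ j - alphaHat c pX φ f X Z T n j ω‖ ^ 2 := by
    intro n ω
    have h1 : (∫ x in D, ‖(f x : ℂ) - fieldEst c pX φ f X Z T n k x ω‖ ^ 2)
        = ∫ x in D, ‖∑ j ∈ Finset.range k,
            (coeff D f φ j - alphaHat c pX φ f X Z T n j ω) * φ j x‖ ^ 2 := by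
      refine integral_congr_ae ?_
      filter_upwards [hspan] with x hx
      rw [hx]
      unfold fieldEst
      rw [← Finset.sum_sub_distrib]
      have he : ∀ j ∈ Finset.range k,
          coeff D f φ j * φ j x - alphaHat c pX φ f X Z T n j ω * φ j x
            = (coeff D f φ j - alphaHat c pX φ f X Z T n j ω) * φ j x := fun j _ => by ring
      rw [Finset.sum_congr rfl he]
    rw [h1]
    have := l2_expansion k hφL2 hON (fun j => coeff D f φ j - alphaHat c pX φ f X Z T n j ω)
    convert this using 2
  -- main bound
  have hmain : ∀ n : ℕ, 0 < n →
      intMSE P D c pX φ f X Z T n k ≤ c ^ 2 * k / (n * ν) := by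
    intro n hn
    unfold intMSE
    have h1 : (∫ ω, (∫ x in D, ‖(f x : ℂ) - fieldEst c pX φ f X Z T n k x ω‖ ^ 2) ∂P)
        = ∑ j ∈ Finset.range k,
            ∫ ω, ‖coeff D f φ j - alphaHat c pX φ f X Z T n j ω‖ ^ 2 ∂P := by
      rw [integral_congr_ae (Filter.Eventually.of_forall fun ω => hsp n ω)]
      exact integral_finset_sum _ (fun j hj => hdL2 n hn j (Finset.mem_range.1 hj))
    rw [h1]
    calc (∑ j ∈ Finset.range k,
          ∫ ω, ‖coeff D f φ j - alphaHat c pX φ f X Z T n j ω‖ ^ 2 ∂P)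
        ≤ ∑ _j ∈ Finset.range k, c ^ 2 / (n * ν) :=
          Finset.sum_le_sum (fun j hj => hEj n hn j (Finset.mem_range.1 hj))
      _ = k * (c ^ 2 / (n * ν)) := by simp [mul_comm]
      _ = c ^ 2 * k / (n * ν) := by ring
  refine ⟨hmain, ⟨c ^ 2 * k / ν, fun n hn => ?_⟩⟩
  have hn0 : (n : ℝ) ≠ 0 := Nat.cast_ne_zero.2 hn.ne'
  have := hmain n hn
  calc intMSE P D c pX φ f X Z T n k ≤ c ^ 2 * k / (n * ν) := this
    _ = c ^ 2 * k / ν / n := by field_simp
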